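/- Let p_n(z) = 1 - (z + z² + ⋯ + zⁿ)/n. Then for every f ∈ H², ‖p_n f - f‖_{H²} → 0 as n → ∞. -/

import Mathlib

open Complex Metric Filter

noncomputable def meanSq (f : ℂ → ℂ) (r : ℝ) : ℝ :=
  (2 * Real.pi)⁻¹ * ∫ θ in (0:ℝ)..(2 * Real.pi), ‖f ((r : ℂ) * Complex.exp (θ * Complex.I))‖ ^ 2

def MemH2 (f : ℂ → ℂ) : Prop :=
  DifferentiableOn ℂ f (ball 0 1) ∧ BddAbove (meanSq f '' Set.Ioo 0 1)

noncomputable def h2Norm (f : ℂ → ℂ) : ℝ :=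
  Real.sqrt (sSup (meanSq f '' Set.Ioo 0 1))

/-- The polynomial `p_n(z) = 1 - (z + z² + ⋯ + zⁿ)/n`. -/
noncomputable def pPoly (n : ℕ) (z : ℂ) : ℂ :=
  1 - (∑ k ∈ Finset.range n, z ^ (k + 1)) / (n : ℂ)

open MeasureTheory
open scoped NNReal ENNReal

namespace PPolyAux

lemma two_pi_pos : (0:ℝ) < 2 * Real.pi := by positivity

lemma integral_exp_int (m : ℤ) :
    (∫ θ in (0:ℝ)..(2*Real.pi), Complex.exp (m * θ * Complex.I)) =
      if m = 0 then ((2*Real.pi : ℝ) : ℂ) else 0 := by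
  rcases eq_or_ne m 0 with h | h
  · simp [h]
  · rw [if_neg h]
    have h1 : ∀ θ : ℝ, Complex.exp ((m : ℂ) * θ * Complex.I)
        = Complex.exp (((m : ℂ) * Complex.I) * θ) := by
      intro θ; ring_nf
    simp_rw [h1]
    rw [integral_exp_mul_complex (by simp [h, Complex.I_ne_zero])]
    have h2 : Complex.exp ((m : ℂ) * Complex.I * (2 * (Real.pi : ℂ))) = 1 := by
      rw [show ((m : ℂ) * Complex.I) * (2 * (Real.pi : ℂ))
          = (m : ℤ) * (2 * (Real.pi : ℂ) * Complex.I) by push_cast; ring]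
      exact Complex.exp_int_mul_two_pi_mul_I m
    rw [show ((2 * Real.pi : ℝ) : ℂ) = 2 * (Real.pi : ℂ) by push_cast; ring, h2]
    simp

lemma shift_vanish {α : Type*} [Zero α] (f : ℕ → α) (d : ℕ) :
    ∀ x ∉ Set.range (· + d), (if d ≤ x then f (x - d) else 0) = 0 := by
  intro x hx
  have : ¬ d ≤ x := fun hdx => hx ⟨x - d, by simpa using Nat.sub_add_cancel hdx⟩
  simp [this]

lemma shift_summable {f : ℕ → ℝ} (hf : Summable f) (d : ℕ) :
    Summable (fun k => if d ≤ k then f (k - d) else 0) := by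
  refine ((add_left_injective d).summable_iff (shift_vanish f d)).mp ?_
  have : (fun k => if d ≤ k then f (k - d) else 0) ∘ (· + d) = f := by
    funext i; simp
  rw [this]; exact hf

lemma shift_tsum (f : ℕ → ℝ) (d : ℕ) :
    ∑' k, (if d ≤ k then f (k - d) else 0) = ∑' k, f k := by
  have h1 : ∑' i, (if d ≤ i + d then f (i + d - d) else 0) = ∑' k, f k := by
    simp
  rw [← h1]
  refine ((add_left_injective d).tsum_eq ?_).symm
  intro x hx
  have hd : d ≤ x := by
    by_contra hc
    simp [hc] at hx
  exact ⟨x - d, by simpa using Nat.sub_add_cancel hd⟩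

lemma parseval {a : ℕ → ℂ} {h : ℂ → ℂ} {r : ℝ} (hr0 : 0 < r) (hr1 : r < 1)
    (hsum : Summable fun k => ‖a k‖ * r ^ k)
    (hrep : ∀ z : ℂ, ‖z‖ = r → HasSum (fun k => a k * z ^ k) (h z)) :
    meanSq h r = ∑' k, (‖a k‖ * r ^ k) ^ 2 := by
  set c : ℝ → ℂ := fun θ => (r:ℂ) * Complex.exp (θ * Complex.I) with hc
  have hnc : ∀ θ, ‖c θ‖ = r := by
    intro θ
    simp [c, norm_mul, Complex.norm_exp_ofReal_mul_I,
      Complex.norm_real, Real.norm_eq_abs, abs_of_pos hr0]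
  set u : ℕ → ℝ → ℂ := fun j θ => a j * c θ ^ j with hu
  have hnu : ∀ j θ, ‖u j θ‖ = ‖a j‖ * r ^ j := by
    intro j θ; simp [u, norm_mul, norm_pow, hnc]
  have hA : ∀ θ, HasSum (fun j => u j θ) (h (c θ)) := fun θ => hrep _ (hnc θ)
  -- continuity of each term and of products
  have hcu : ∀ j, Continuous (u j) := by
    intro j
    apply continuous_const.mul
    apply Continuous.pow
    exact continuous_const.mul (Complex.continuous_exp.comp
      ((Complex.continuous_ofReal).mul continuous_const))
  set v : ℕ × ℕ → ℝ → ℂ := fun p θ => u p.1 θ * (starRingEnd ℂ) (u p.2 θ) with hv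
  have hcv : ∀ p, Continuous (v p) := fun p =>
    (hcu p.1).mul (Complex.continuous_conj.comp (hcu p.2))
  -- pointwise product expansion
  have hG : ∀ θ, h (c θ) * (starRingEnd ℂ) (h (c θ)) = ∑' (p : ℕ × ℕ), v p θ := by
    intro θ
    have s1 : Summable fun j => ‖u j θ‖ := by
      simpa only [hnu] using hsum
    have s2 : Summable fun j => ‖(starRingEnd ℂ) (u j θ)‖ := by
      simpa only [RCLike.norm_conj] using s1
    have hstar : HasSum (fun j => (starRingEnd ℂ) (u j θ)) ((starRingEnd ℂ) (h (c θ))) := by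
      simpa only [RCLike.star_def] using (hA θ).star
    rw [← hstar.tsum_eq, ← (hA θ).tsum_eq]
    exact tsum_mul_tsum_of_summable_norm s1 s2
  -- value of each basic integral
  have key : ∀ p : ℕ × ℕ, (∫ θ in Set.Ioc (0:ℝ) (2*Real.pi), v p θ) =
      if p.1 = p.2 then ((2*Real.pi * (‖a p.1‖ * r ^ p.1)^2 : ℝ) : ℂ) else 0 := by
    rintro ⟨j, k⟩
    have e : ∀ θ : ℝ, v (j, k) θ
        = (a j * (starRingEnd ℂ) (a k) * (r:ℂ) ^ (j + k))
            * Complex.exp ((((j:ℤ) - (k:ℤ) : ℤ) : ℂ) * θ * Complex.I) := by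
      intro θ
      have h1 : (starRingEnd ℂ) (Complex.exp ((θ:ℂ) * Complex.I))
          = Complex.exp (-((θ:ℂ) * Complex.I)) := by
        rw [← Complex.exp_conj]
        congr 1
        simp [Complex.conj_ofReal]
      have h2 : Complex.exp ((θ:ℂ) * Complex.I) ^ j
          = Complex.exp ((j:ℂ) * ((θ:ℂ) * Complex.I)) := by
        rw [← Complex.exp_nat_mul]
      have h3 : Complex.exp (-((θ:ℂ) * Complex.I)) ^ k
          = Complex.exp ((k:ℂ) * -((θ:ℂ) * Complex.I)) := by
        rw [← Complex.exp_nat_mul]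
      have h4 : (((j:ℤ) - (k:ℤ) : ℤ) : ℂ) * θ * Complex.I
          = (j:ℂ) * ((θ:ℂ) * Complex.I) + (k:ℂ) * -((θ:ℂ) * Complex.I) := by
        push_cast; ring
      simp only [v, u, c, mul_pow, map_mul, map_pow, Complex.conj_ofReal, h1, h2, h3, h4,
        Complex.exp_add]
      ring
    calc (∫ θ in Set.Ioc (0:ℝ) (2*Real.pi), v (j, k) θ)
        = ∫ θ in Set.Ioc (0:ℝ) (2*Real.pi),
            (a j * (starRingEnd ℂ) (a k) * (r:ℂ) ^ (j + k))
              * Complex.exp ((((j:ℤ) - (k:ℤ) : ℤ) : ℂ) * θ * Complex.I) := by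
          simp_rw [e]
      _ = (a j * (starRingEnd ℂ) (a k) * (r:ℂ) ^ (j + k))
            * ∫ θ in Set.Ioc (0:ℝ) (2*Real.pi),
                Complex.exp ((((j:ℤ) - (k:ℤ) : ℤ) : ℂ) * θ * Complex.I) := by
          exact integral_const_mul _ _
      _ = if j = k then ((2*Real.pi * (‖a j‖ * r ^ j)^2 : ℝ) : ℂ) else 0 := by
          rw [← intervalIntegral.integral_of_le two_pi_pos.le, integral_exp_int]
          rcases eq_or_ne j k with hjk | hjk
          · subst hjk
            rw [if_pos (by omega), if_pos rfl]
            rw [Complex.mul_conj]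
            rw [Complex.normSq_eq_norm_sq]
            push_cast
            ring
          · rw [if_neg (by omega), if_neg hjk, mul_zero]
  -- the interchange of sum and integral
  have hq : Summable fun j => ‖a j‖ * r ^ j := hsum
  have hq0 : ∀ j, 0 ≤ ‖a j‖ * r ^ j := fun j => by positivity
  have hInt : (∫ θ in Set.Ioc (0:ℝ) (2*Real.pi), (∑' (p : ℕ × ℕ), v p θ))
      = ∑' (p : ℕ × ℕ), ∫ θ in Set.Ioc (0:ℝ) (2*Real.pi), v p θ := by
    apply MeasureTheory.integral_tsum
    · exact fun p => (hcv p).aestronglyMeasurable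
    · have hb : ∀ p : ℕ × ℕ, (∫⁻ θ in Set.Ioc (0:ℝ) (2*Real.pi), ‖v p θ‖ₑ)
          = (ENNReal.ofReal (‖a p.1‖ * r ^ p.1) * ENNReal.ofReal (‖a p.2‖ * r ^ p.2))
            * ENNReal.ofReal (2*Real.pi) := by
        intro p
        have hval : ∀ θ : ℝ, ‖v p θ‖ₑ
            = ENNReal.ofReal (‖a p.1‖ * r ^ p.1) * ENNReal.ofReal (‖a p.2‖ * r ^ p.2) := by
          intro θ
          rw [← ENNReal.ofReal_mul (hq0 _)]
          rw [← ofReal_norm]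
          congr 1
          simp only [v, norm_mul, RCLike.norm_conj, hnu]
        simp_rw [hval]
        rw [MeasureTheory.lintegral_const, Measure.restrict_apply MeasurableSet.univ,
          Set.univ_inter, Real.volume_Ioc]
        congr 1
        rw [sub_zero]
      simp_rw [hb]
      apply ne_of_lt
      have : (∑' (p : ℕ × ℕ), (ENNReal.ofReal (‖a p.1‖ * r ^ p.1)
          * ENNReal.ofReal (‖a p.2‖ * r ^ p.2)) * ENNReal.ofReal (2*Real.pi))
          = (∑' j, ENNReal.ofReal (‖a j‖ * r ^ j)) * ((∑' j, ENNReal.ofReal (‖a j‖ * r ^ j))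
            * ENNReal.ofReal (2*Real.pi)) := by
        rw [ENNReal.tsum_prod']
        simp_rw [mul_assoc, ENNReal.tsum_mul_left, ← mul_assoc, ENNReal.tsum_mul_right]
        rw [mul_assoc]
      rw [this]
      have hfin : (∑' j, ENNReal.ofReal (‖a j‖ * r ^ j)) < ⊤ := by
        rw [← ENNReal.ofReal_tsum_of_nonneg hq0 hq]
        exact ENNReal.ofReal_lt_top
      exact ENNReal.mul_lt_top hfin (ENNReal.mul_lt_top hfin ENNReal.ofReal_lt_top)
  -- diagonal sum
  have hdiag : (∑' (p : ℕ × ℕ), (if p.1 = p.2 then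
        ((2*Real.pi * (‖a p.1‖ * r ^ p.1)^2 : ℝ) : ℂ) else 0))
      = ∑' j, ((2*Real.pi * (‖a j‖ * r ^ j)^2 : ℝ) : ℂ) := by
    have hinj : Function.Injective (fun j : ℕ => (j, j) : ℕ → ℕ × ℕ) := by
      intro i j hij
      exact congrArg Prod.fst hij
    have := hinj.tsum_eq (f := fun p : ℕ × ℕ => if p.1 = p.2 then
        ((2*Real.pi * (‖a p.1‖ * r ^ p.1)^2 : ℝ) : ℂ) else 0) ?_
    · rw [← this]
      simp
    · intro p hp
      rcases p with ⟨i, j⟩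
      simp only [Function.mem_support, ne_eq, ite_eq_right_iff, not_forall] at hp
      exact ⟨i, by simp [hp.1]⟩
  -- summability of squares
  have hqM : ∀ j, ‖a j‖ * r ^ j ≤ ∑' i, ‖a i‖ * r ^ i := fun j => hq.le_tsum j fun i _ => hq0 i
  have hsq : Summable fun j => (‖a j‖ * r ^ j) ^ 2 := by
    apply Summable.of_nonneg_of_le (fun j => by positivity)
      (fun j => ?_) (hq.mul_left (∑' i, ‖a i‖ * r ^ i))
    calc (‖a j‖ * r ^ j) ^ 2 = (‖a j‖ * r ^ j) * (‖a j‖ * r ^ j) := sq (‖a j‖ * r ^ j) ▸ by ring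
      _ ≤ (∑' i, ‖a i‖ * r ^ i) * (‖a j‖ * r ^ j) :=
          mul_le_mul_of_nonneg_right (hqM j) (hq0 j)
  -- continuity of h ∘ c for integrability
  have hhc : Continuous fun θ => h (c θ) := by
    have : (fun θ => h (c θ)) = fun θ => ∑' j, u j θ := by
      funext θ; exact ((hA θ).tsum_eq).symm
    rw [this]
    exact continuous_tsum hcu hsum (fun j θ => le_of_eq (hnu j θ))
  have hIntG : IntegrableOn (fun θ => h (c θ) * (starRingEnd ℂ) (h (c θ)))
      (Set.Ioc (0:ℝ) (2*Real.pi)) := by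
    exact (hhc.mul (Complex.continuous_conj.comp hhc)).integrableOn_Ioc
  -- put everything together
  have hchain : (∫ θ in Set.Ioc (0:ℝ) (2*Real.pi), h (c θ) * (starRingEnd ℂ) (h (c θ)))
      = (((2*Real.pi) * ∑' k, (‖a k‖ * r ^ k) ^ 2 : ℝ) : ℂ) := by
    calc (∫ θ in Set.Ioc (0:ℝ) (2*Real.pi), h (c θ) * (starRingEnd ℂ) (h (c θ)))
        = ∫ θ in Set.Ioc (0:ℝ) (2*Real.pi), (∑' (p : ℕ × ℕ), v p θ) := by simp_rw [hG]
      _ = ∑' (p : ℕ × ℕ), ∫ θ in Set.Ioc (0:ℝ) (2*Real.pi), v p θ := hInt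
      _ = ∑' (p : ℕ × ℕ), (if p.1 = p.2 then
            ((2*Real.pi * (‖a p.1‖ * r ^ p.1)^2 : ℝ) : ℂ) else 0) := tsum_congr key
      _ = ∑' j, ((2*Real.pi * (‖a j‖ * r ^ j)^2 : ℝ) : ℂ) := hdiag
      _ = (((∑' j, 2*Real.pi * (‖a j‖ * r ^ j)^2 : ℝ)) : ℂ) := (Complex.ofReal_tsum _).symm
      _ = (((2*Real.pi) * ∑' k, (‖a k‖ * r ^ k) ^ 2 : ℝ) : ℂ) := by
          rw [tsum_mul_left]
  unfold meanSq
  rw [intervalIntegral.integral_of_le two_pi_pos.le]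
  have hre : ∀ θ : ℝ, ‖h ((r:ℂ) * Complex.exp ((θ:ℂ) * Complex.I))‖ ^ 2
      = (h (c θ) * (starRingEnd ℂ) (h (c θ))).re := by
    intro θ
    rw [Complex.mul_conj, Complex.normSq_eq_norm_sq]
    simp [← Complex.ofReal_pow, c]
  simp_rw [hre]
  rw [← RCLike.re_eq_complex_re, integral_re hIntG, RCLike.re_eq_complex_re,
    hchain]
  rw [Complex.ofReal_re]
  rw [← mul_assoc, inv_mul_cancel₀ (ne_of_gt two_pi_pos), one_mul]

lemma l2_est (c : ℕ → ℂ) (hc : Summable fun i => ‖c i‖ ^ 2) (n d : ℕ) (hn : 1 ≤ n)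
    (hcard : ∀ k,
      ((Finset.range n).filter fun j => j + 1 ≤ k ∧ c (k - (j+1)) ≠ 0).card ≤ d) :
    Summable (fun k =>
      ((n:ℝ)⁻¹ * ‖∑ j ∈ Finset.range n, if j + 1 ≤ k then c (k - (j+1)) else 0‖) ^ 2)
    ∧ ∑' k, ((n:ℝ)⁻¹ * ‖∑ j ∈ Finset.range n, if j + 1 ≤ k then c (k - (j+1)) else 0‖) ^ 2
        ≤ (d:ℝ) / n * ∑' i, ‖c i‖ ^ 2 := by
  have hn0 : (0:ℝ) < (n:ℝ) := by exact_mod_cast hn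
  set W : ℕ → ℝ := fun k => ∑ j ∈ Finset.range n,
    if j + 1 ≤ k then ‖c (k - (j+1))‖ ^ 2 else 0 with hW
  have hWsummand : ∀ j : ℕ, Summable (fun k => if j + 1 ≤ k then ‖c (k - (j+1))‖ ^ 2 else 0) :=
    fun j => shift_summable hc (j+1)
  have hWs : Summable W := summable_sum fun j _ => hWsummand j
  have hWt : ∑' k, W k = (n:ℝ) * ∑' i, ‖c i‖ ^ 2 := by
    rw [hW, Summable.tsum_finsetSum fun j _ => hWsummand j]
    have : ∀ j ∈ Finset.range n,
        (∑' k, if j + 1 ≤ k then ‖c (k - (j+1))‖ ^ 2 else 0) = ∑' i, ‖c i‖ ^ 2 :=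
      fun j _ => shift_tsum (fun i => ‖c i‖ ^ 2) (j+1)
    rw [Finset.sum_congr rfl this, Finset.sum_const, Finset.card_range, nsmul_eq_mul]
  have hpt : ∀ k, ((n:ℝ)⁻¹ * ‖∑ j ∈ Finset.range n,
      if j + 1 ≤ k then c (k - (j+1)) else 0‖) ^ 2 ≤ (d:ℝ) / (n:ℝ)^2 * W k := by
    intro k
    set sk := (Finset.range n).filter fun j => j + 1 ≤ k ∧ c (k - (j+1)) ≠ 0 with hsk
    have e1 : (∑ j ∈ Finset.range n, if j + 1 ≤ k then c (k - (j+1)) else 0)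
        = ∑ j ∈ sk, c (k - (j+1)) := by
      rw [hsk, Finset.sum_filter]
      refine Finset.sum_congr rfl fun j _ => ?_
      by_cases h1 : j + 1 ≤ k <;> by_cases h2 : c (k - (j+1)) = 0 <;> simp [h1, h2]
    have e2 : ‖∑ j ∈ sk, c (k - (j+1))‖ ^ 2
        ≤ (sk.card : ℝ) * ∑ j ∈ sk, ‖c (k - (j+1))‖ ^ 2 := by
      calc ‖∑ j ∈ sk, c (k - (j+1))‖ ^ 2 ≤ (∑ j ∈ sk, ‖c (k - (j+1))‖) ^ 2 := by
            apply pow_le_pow_left₀ (norm_nonneg _) (norm_sum_le _ _)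
        _ ≤ (sk.card : ℝ) * ∑ j ∈ sk, ‖c (k - (j+1))‖ ^ 2 := by
            exact sq_sum_le_card_mul_sum_sq
    have e3 : ∑ j ∈ sk, ‖c (k - (j+1))‖ ^ 2 ≤ W k := by
      rw [show ∑ j ∈ sk, ‖c (k - (j+1))‖ ^ 2
          = ∑ j ∈ sk, (if j + 1 ≤ k then ‖c (k - (j+1))‖ ^ 2 else 0) from
        Finset.sum_congr rfl fun j hj => by simp [(Finset.mem_filter.mp hj).2.1]]
      exact Finset.sum_le_sum_of_subset_of_nonneg (Finset.filter_subset _ _)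
        fun j _ _ => by positivity
    have hsnonneg : (0:ℝ) ≤ ∑ j ∈ sk, ‖c (k - (j+1))‖ ^ 2 :=
      Finset.sum_nonneg fun j _ => by positivity
    have hcd : (sk.card : ℝ) ≤ (d:ℝ) := by exact_mod_cast hcard k
    have e4 : ‖∑ j ∈ Finset.range n, if j + 1 ≤ k then c (k - (j+1)) else 0‖ ^ 2
        ≤ (d:ℝ) * W k := by
      rw [e1]
      calc ‖∑ j ∈ sk, c (k - (j+1))‖ ^ 2 ≤ (sk.card : ℝ) * ∑ j ∈ sk, ‖c (k - (j+1))‖ ^ 2 := e2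
        _ ≤ (d:ℝ) * W k := mul_le_mul hcd e3 hsnonneg (by positivity)
    rw [mul_pow]
    calc ((n:ℝ)⁻¹) ^ 2 * ‖∑ j ∈ Finset.range n, if j + 1 ≤ k then c (k - (j+1)) else 0‖ ^ 2
        ≤ ((n:ℝ)⁻¹) ^ 2 * ((d:ℝ) * W k) := by
          apply mul_le_mul_of_nonneg_left e4 (by positivity)
      _ = (d:ℝ) / (n:ℝ)^2 * W k := by field_simp
  have hWs' : Summable fun k => (d:ℝ) / (n:ℝ)^2 * W k := hWs.mul_left _
  have hS : Summable (fun k =>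
      ((n:ℝ)⁻¹ * ‖∑ j ∈ Finset.range n, if j + 1 ≤ k then c (k - (j+1)) else 0‖) ^ 2) :=
    Summable.of_nonneg_of_le (fun k => by positivity) hpt hWs'
  refine ⟨hS, ?_⟩
  calc ∑' k, ((n:ℝ)⁻¹ * ‖∑ j ∈ Finset.range n, if j + 1 ≤ k then c (k - (j+1)) else 0‖) ^ 2
      ≤ ∑' k, (d:ℝ) / (n:ℝ)^2 * W k := Summable.tsum_le_tsum hpt hS hWs'
    _ = (d:ℝ) / (n:ℝ)^2 * ((n:ℝ) * ∑' i, ‖c i‖ ^ 2) := by rw [tsum_mul_left, hWt]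
    _ = (d:ℝ) / n * ∑' i, ‖c i‖ ^ 2 := by field_simp

set_option maxHeartbeats 1000000 in

lemma exists_coeffs {f : ℂ → ℂ} (hdiff : DifferentiableOn ℂ f (ball 0 1)) :
    ∃ a : ℕ → ℂ, ∀ r : ℝ, r ∈ Set.Ioo (0:ℝ) 1 →
      (Summable fun k => ‖a k‖ * r ^ k) ∧
      ∀ z : ℂ, ‖z‖ = r → HasSum (fun k => a k * z ^ k) (f z) := by
  have key : ∀ ρ : ℝ≥0, 0 < ρ → (ρ:ℝ) < 1 →
      HasFPowerSeriesOnBall f (cauchyPowerSeries f 0 ρ) 0 ρ := by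
    intro ρ h0 h1
    refine DifferentiableOn.hasFPowerSeriesOnBall (hdiff.mono ?_) h0
    intro z hz
    simp only [Metric.mem_closedBall, Metric.mem_ball] at *
    linarith
  set ρ₀ : ℝ≥0 := ⟨(1:ℝ)/2, by norm_num⟩ with hρ₀
  set p := cauchyPowerSeries f 0 ρ₀ with hp
  have hhalf : HasFPowerSeriesOnBall f p 0 ρ₀ :=
    key _ (by rw [← NNReal.coe_lt_coe, show ((ρ₀:ℝ)) = 1/2 from rfl]; norm_num) (by rw [show ((ρ₀:ℝ)) = 1/2 from rfl]; norm_num)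
  refine ⟨p.coeff, ?_⟩
  rintro r ⟨hr0, hr1⟩
  set ρ : ℝ≥0 := ⟨(r+1)/2, by positivity⟩ with hρ
  have hρcoe : (ρ : ℝ) = (r+1)/2 := rfl
  have hρr : r < (ρ:ℝ) := by rw [hρcoe]; linarith
  have hρ1 : (ρ:ℝ) < 1 := by rw [hρcoe]; linarith
  have hρ0 : 0 < ρ := by
    rw [← NNReal.coe_lt_coe, hρcoe]
    positivity
  have hball : HasFPowerSeriesOnBall f p 0 ρ := by
    have h1 := key ρ hρ0 hρ1
    rwa [← hhalf.hasFPowerSeriesAt.eq_formalMultilinearSeries h1.hasFPowerSeriesAt] at h1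
  constructor
  · have hrad : ((r.toNNReal : ℝ≥0) : ℝ≥0∞) < p.radius := by
      refine lt_of_lt_of_le ?_ hball.r_le
      rw [ENNReal.coe_lt_coe, ← NNReal.coe_lt_coe, Real.coe_toNNReal _ hr0.le]
      exact hρr
    have hs := p.summable_norm_mul_pow hrad
    have he : ∀ k, ‖p k‖ * ((r.toNNReal : ℝ≥0) : ℝ) ^ k = ‖p.coeff k‖ * r ^ k := by
      intro k
      rw [p.norm_apply_eq_norm_coef, Real.coe_toNNReal _ hr0.le]
    exact hs.congr he
  · intro z hz
    have hzb : z ∈ Metric.eball (0:ℂ) ρ := by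
      rw [Metric.mem_eball, edist_zero_right]
      have : ‖z‖₊ < ρ := by
        rw [← NNReal.coe_lt_coe, coe_nnnorm, hz]
        exact hρr
      exact_mod_cast this
    have hs := hball.hasSum hzb
    have he : (fun n => p n fun _ => z) = fun n => p.coeff n * z ^ n := by
      funext n
      rw [FormalMultilinearSeries.apply_eq_pow_smul_coeff, smul_eq_mul, mul_comm]
    rw [he] at hs
    simpa using hs

noncomputable def bco (a : ℕ → ℂ) (n k : ℕ) : ℂ :=
  -((n:ℂ))⁻¹ * ∑ j ∈ Finset.range n, if j + 1 ≤ k then a (k - (j+1)) else 0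

lemma norm_bco (a : ℕ → ℂ) (n k : ℕ) :
    ‖bco a n k‖ = (n:ℝ)⁻¹ * ‖∑ j ∈ Finset.range n, if j + 1 ≤ k then a (k - (j+1)) else 0‖ := by
  rw [bco, norm_mul, norm_neg, norm_inv, Complex.norm_natCast]

lemma b_rep {f : ℂ → ℂ} {a : ℕ → ℂ} {r : ℝ} (hr0 : 0 < r)
    (hsum : Summable fun k => ‖a k‖ * r ^ k)
    (hrep : ∀ z : ℂ, ‖z‖ = r → HasSum (fun k => a k * z ^ k) (f z)) (n : ℕ) :
    (Summable fun k => ‖bco a n k‖ * r ^ k) ∧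
    ∀ z : ℂ, ‖z‖ = r → HasSum (fun k => bco a n k * z ^ k)
      (pPoly n z * f z - f z) := by
  constructor
  · have hw : ∀ j : ℕ, Summable fun k =>
        (if j + 1 ≤ k then ‖a (k - (j+1))‖ else 0) * r ^ k := by
      intro j
      have he : (fun k => (if j + 1 ≤ k then ‖a (k - (j+1))‖ else 0) * r ^ k)
          = fun k => if j + 1 ≤ k then (‖a (k - (j+1))‖ * r ^ (k - (j+1))) * r ^ (j+1)
            else 0 := by
        funext k
        split_ifs with h1
        · rw [mul_assoc, ← pow_add, Nat.sub_add_cancel h1]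
        · rw [zero_mul]
      rw [he]
      exact shift_summable (hsum.mul_right (r ^ (j+1))) (j+1)
    have hsb : Summable fun k => ∑ j ∈ Finset.range n,
        (if j + 1 ≤ k then ‖a (k - (j+1))‖ else 0) * r ^ k :=
      summable_sum fun j _ => hw j
    apply Summable.of_nonneg_of_le (fun k => by positivity) ?_ (hsb.mul_left (n:ℝ)⁻¹)
    intro k
    rw [norm_bco, mul_assoc, ← Finset.sum_mul]
    apply mul_le_mul_of_nonneg_left ?_ (by positivity)
    apply mul_le_mul_of_nonneg_right ?_ (by positivity)
    refine le_trans (norm_sum_le _ _) (le_of_eq (Finset.sum_congr rfl fun j _ => ?_))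
    split_ifs with h1 <;> simp
  · intro z hz
    have h0 := hrep z hz
    have step2 : ∀ j : ℕ, HasSum
        (fun k => (if j + 1 ≤ k then a (k - (j+1)) else 0) * z ^ k) (f z * z ^ (j+1)) := by
      intro j
      have h1 : HasSum (fun k => a k * z ^ k * z ^ (j+1)) (f z * z ^ (j+1)) :=
        h0.mul_right _
      refine (Function.Injective.hasSum_iff (add_left_injective (j+1)) ?_).mp ?_
      · intro x hx
        have : ¬ j + 1 ≤ x := fun hd => hx ⟨x - (j+1), by simpa using Nat.sub_add_cancel hd⟩
        simp [this]
      · have he : ((fun k => (if j + 1 ≤ k then a (k - (j+1)) else 0) * z ^ k) ∘ (· + (j+1)))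
            = fun k => a k * z ^ k * z ^ (j+1) := by
          funext i
          simp only [Function.comp]
          rw [if_pos (by omega), show i + (j+1) - (j+1) = i by omega, pow_add]
          ring
        rw [he]
        exact h1
    have step3 : HasSum
        (fun k => ∑ j ∈ Finset.range n, (if j + 1 ≤ k then a (k - (j+1)) else 0) * z ^ k)
        (∑ j ∈ Finset.range n, f z * z ^ (j+1)) := hasSum_sum fun j _ => step2 j
    have step4 := step3.mul_left (-((n:ℂ))⁻¹)
    have he2 : (fun k => -((n:ℂ))⁻¹ * ∑ j ∈ Finset.range n,
        (if j + 1 ≤ k then a (k - (j+1)) else 0) * z ^ k) = fun k => bco a n k * z ^ k := by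
      funext k
      rw [bco, ← Finset.sum_mul]
      ring
    have hv : -((n:ℂ))⁻¹ * ∑ j ∈ Finset.range n, f z * z ^ (j+1)
        = pPoly n z * f z - f z := by
      rw [← Finset.mul_sum, pPoly, div_eq_mul_inv]
      ring
    rw [he2] at step4
    exact hv ▸ step4

lemma split_est (a : ℕ → ℂ) (Sa : Summable fun k => ‖a k‖ ^ 2) (m n : ℕ) (hn : 1 ≤ n) :
    Summable (fun k => ‖bco a n k‖ ^ 2) ∧
    ∑' k, ‖bco a n k‖ ^ 2
      ≤ 2 * ((m:ℝ) / n * ∑' k, ‖a k‖ ^ 2 + ∑' i, ‖a (i + m)‖ ^ 2) := by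
  classical
  set hd : ℕ → ℂ := fun i => if i < m then a i else 0 with hhd
  set tl : ℕ → ℂ := fun i => if i < m then 0 else a i with htl
  have Shd : Summable fun i => ‖hd i‖ ^ 2 := by
    apply Summable.of_nonneg_of_le (fun i => by positivity) ?_ Sa
    intro i
    by_cases h : i < m <;> simp [hhd, h]
  have Stl : Summable fun i => ‖tl i‖ ^ 2 := by
    apply Summable.of_nonneg_of_le (fun i => by positivity) ?_ Sa
    intro i
    by_cases h : i < m <;> simp [htl, h]
  have card_h : ∀ k,
      ((Finset.range n).filter fun j => j + 1 ≤ k ∧ hd (k - (j+1)) ≠ 0).card ≤ m := by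
    intro k
    refine le_trans (Finset.card_le_card (t := Finset.Ico (k - m) k) (fun j hj => ?_)) ?_
    · rcases Finset.mem_filter.mp hj with ⟨hjr, hc1, hc2⟩
      have hlt : k - (j+1) < m := by
        by_contra hge
        exact hc2 (by simp [hhd, hge])
      exact Finset.mem_Ico.mpr (by omega)
    · rw [Nat.card_Ico]
      omega
  have card_t : ∀ k,
      ((Finset.range n).filter fun j => j + 1 ≤ k ∧ tl (k - (j+1)) ≠ 0).card ≤ n := by
    intro k
    exact le_trans (Finset.card_filter_le _ _) (by simp)
  have Lh := l2_est hd Shd n m hn card_h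
  have Lt := l2_est tl Stl n n hn card_t
  set wh : ℕ → ℝ := fun k =>
    ((n:ℝ)⁻¹ * ‖∑ j ∈ Finset.range n, if j + 1 ≤ k then hd (k - (j+1)) else 0‖) ^ 2 with hwh
  set wt : ℕ → ℝ := fun k =>
    ((n:ℝ)⁻¹ * ‖∑ j ∈ Finset.range n, if j + 1 ≤ k then tl (k - (j+1)) else 0‖) ^ 2 with hwt
  have hpt : ∀ k, ‖bco a n k‖ ^ 2 ≤ 2 * (wh k + wt k) := by
    intro k
    have hsplitsum : (∑ j ∈ Finset.range n, if j + 1 ≤ k then a (k - (j+1)) else 0)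
        = (∑ j ∈ Finset.range n, if j + 1 ≤ k then hd (k - (j+1)) else 0)
          + (∑ j ∈ Finset.range n, if j + 1 ≤ k then tl (k - (j+1)) else 0) := by
      rw [← Finset.sum_add_distrib]
      refine Finset.sum_congr rfl fun j _ => ?_
      by_cases h1 : j + 1 ≤ k
      · simp only [if_pos h1, hhd, htl]
        by_cases h2 : k - (j+1) < m <;> simp [h2]
      · simp [h1]
    rw [norm_bco, hsplitsum]
    have hn0 : (0:ℝ) ≤ (n:ℝ)⁻¹ := by positivity
    have htri : ‖(∑ j ∈ Finset.range n, if j + 1 ≤ k then hd (k - (j+1)) else 0)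
          + (∑ j ∈ Finset.range n, if j + 1 ≤ k then tl (k - (j+1)) else 0)‖
        ≤ ‖∑ j ∈ Finset.range n, if j + 1 ≤ k then hd (k - (j+1)) else 0‖
          + ‖∑ j ∈ Finset.range n, if j + 1 ≤ k then tl (k - (j+1)) else 0‖ :=
      norm_add_le _ _
    have h1 : ((n:ℝ)⁻¹ * ‖(∑ j ∈ Finset.range n, if j + 1 ≤ k then hd (k - (j+1)) else 0)
          + (∑ j ∈ Finset.range n, if j + 1 ≤ k then tl (k - (j+1)) else 0)‖) ^ 2
        ≤ ((n:ℝ)⁻¹ * (‖∑ j ∈ Finset.range n, if j + 1 ≤ k then hd (k - (j+1)) else 0‖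
          + ‖∑ j ∈ Finset.range n, if j + 1 ≤ k then tl (k - (j+1)) else 0‖)) ^ 2 := by
      apply pow_le_pow_left₀ (by positivity)
      exact mul_le_mul_of_nonneg_left htri hn0
    refine le_trans h1 ?_
    simp only [hwh, hwt]
    nlinarith [norm_nonneg (∑ j ∈ Finset.range n, if j + 1 ≤ k then hd (k - (j+1)) else 0),
      norm_nonneg (∑ j ∈ Finset.range n, if j + 1 ≤ k then tl (k - (j+1)) else 0),
      sq_nonneg ((n:ℝ)⁻¹ * ‖∑ j ∈ Finset.range n, if j + 1 ≤ k then hd (k - (j+1)) else 0‖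
        - (n:ℝ)⁻¹ * ‖∑ j ∈ Finset.range n, if j + 1 ≤ k then tl (k - (j+1)) else 0‖), hn0]
  have hsum2 : Summable fun k => 2 * (wh k + wt k) := (Lh.1.add Lt.1).mul_left 2
  have hBsum : Summable fun k => ‖bco a n k‖ ^ 2 :=
    Summable.of_nonneg_of_le (fun k => by positivity) hpt hsum2
  refine ⟨hBsum, ?_⟩
  have htl_tsum : ∑' i, ‖tl i‖ ^ 2 = ∑' i, ‖a (i + m)‖ ^ 2 := by
    have he : (fun k => ‖tl k‖ ^ 2)
        = fun k => if m ≤ k then (fun i => ‖a (i + m)‖ ^ 2) (k - m) else 0 := by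
      funext k
      by_cases h : m ≤ k
      · rw [if_pos h]
        simp only [htl, if_neg (by omega : ¬ k < m)]
        rw [Nat.sub_add_cancel h]
      · rw [if_neg h]
        simp [htl, (show k < m by omega)]
    rw [he]
    exact shift_tsum (fun i => ‖a (i + m)‖ ^ 2) m
  have hhd_tsum : ∑' i, ‖hd i‖ ^ 2 ≤ ∑' k, ‖a k‖ ^ 2 := by
    apply Summable.tsum_le_tsum ?_ Shd Sa
    intro i
    by_cases h : i < m <;> simp [hhd, h]
  calc ∑' k, ‖bco a n k‖ ^ 2 ≤ ∑' k, 2 * (wh k + wt k) := Summable.tsum_le_tsum hpt hBsum hsum2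
    _ = 2 * (∑' k, wh k + ∑' k, wt k) := by rw [tsum_mul_left, Summable.tsum_add Lh.1 Lt.1]
    _ ≤ 2 * ((m:ℝ) / n * ∑' i, ‖hd i‖ ^ 2 + (n:ℝ) / n * ∑' i, ‖tl i‖ ^ 2) := by
        have := Lh.2
        have := Lt.2
        gcongr
    _ ≤ 2 * ((m:ℝ) / n * ∑' k, ‖a k‖ ^ 2 + ∑' i, ‖a (i + m)‖ ^ 2) := by
        rw [htl_tsum] at *
        have hnn : (n:ℝ) / n = 1 := div_self (by positivity)
        rw [hnn, one_mul]
        have := hhd_tsum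
        gcongr

lemma sq_summable {x : ℕ → ℝ} (hx : Summable x) (h0 : ∀ k, 0 ≤ x k) :
    Summable fun k => x k ^ 2 := by
  have hM : ∀ k, x k ≤ ∑' i, x i := fun k => hx.le_tsum k fun i _ => h0 i
  apply Summable.of_nonneg_of_le (fun k => by positivity) (fun k => ?_)
    (hx.mul_left (∑' i, x i))
  calc x k ^ 2 = x k * x k := sq (x k)
    _ ≤ (∑' i, x i) * x k := mul_le_mul_of_nonneg_right (hM k) (h0 k)

end PPolyAux

/-- For every `f ∈ H²`, `‖p_n f - f‖_{H²} → 0` as `n → ∞`,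
where `p_n(z) = 1 - (z + ⋯ + zⁿ)/n`. -/
theorem pPoly_mul_tendsto (f : ℂ → ℂ) (hf : MemH2 f) :
    Tendsto (fun n : ℕ => h2Norm (fun z => pPoly n z * f z - f z)) atTop (nhds 0) := by
  obtain ⟨hdiff, hbdd⟩ := hf
  obtain ⟨a, ha⟩ := PPolyAux.exists_coeffs hdiff
  set M := sSup (meanSq f '' Set.Ioo 0 1) with hM
  have hfr : ∀ r ∈ Set.Ioo (0:ℝ) 1, meanSq f r ≤ M :=
    fun r hr => le_csSup hbdd ⟨r, hr, rfl⟩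
  have hsqf : ∀ r ∈ Set.Ioo (0:ℝ) 1, Summable fun k => (‖a k‖ * r ^ k) ^ 2 := by
    intro r hr
    have hr0 := hr.1
    exact PPolyAux.sq_summable (ha r hr).1 (fun k => by positivity)
  have Pf : ∀ r ∈ Set.Ioo (0:ℝ) 1, meanSq f r = ∑' k, (‖a k‖ * r ^ k) ^ 2 :=
    fun r hr => PPolyAux.parseval hr.1 hr.2 (ha r hr).1 (ha r hr).2
  have hble : ∀ N : ℕ, ∑ i ∈ Finset.range N, ‖a i‖ ^ 2 ≤ M := by
    intro N
    haveI hneBot : (nhdsWithin (1:ℝ) (Set.Ioo (0:ℝ) 1)).NeBot := by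
      apply mem_closure_iff_nhdsWithin_neBot.mp
      rw [closure_Ioo (by norm_num : (0:ℝ) ≠ 1)]
      exact Set.mem_Icc.mpr (by norm_num)
    have hlim : Tendsto (fun r : ℝ => ∑ i ∈ Finset.range N, (‖a i‖ * r ^ i) ^ 2)
        (nhdsWithin 1 (Set.Ioo (0:ℝ) 1)) (nhds (∑ i ∈ Finset.range N, ‖a i‖ ^ 2)) := by
      have hcont : Continuous fun r : ℝ => ∑ i ∈ Finset.range N, (‖a i‖ * r ^ i) ^ 2 := by
        apply continuous_finset_sum
        intro i _
        fun_prop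
      have h1 := hcont.tendsto 1
      simp only [one_pow, mul_one] at h1
      exact h1.mono_left nhdsWithin_le_nhds
    refine le_of_tendsto hlim ?_
    filter_upwards [self_mem_nhdsWithin] with r hr
    calc ∑ i ∈ Finset.range N, (‖a i‖ * r ^ i) ^ 2 ≤ ∑' k, (‖a k‖ * r ^ k) ^ 2 :=
          Summable.sum_le_tsum _ (fun i _ => by positivity) (hsqf r hr)
      _ = meanSq f r := (Pf r hr).symm
      _ ≤ M := hfr r hr
  have Sa : Summable fun k => ‖a k‖ ^ 2 :=
    summable_of_sum_range_le (fun k => by positivity) hble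
  set B : ℕ → ℝ := fun n => ∑' k, ‖PPolyAux.bco a n k‖ ^ 2 with hB
  have hg : ∀ n : ℕ, 1 ≤ n →
      h2Norm (fun z => pPoly n z * f z - f z) ≤ Real.sqrt (B n) := by
    intro n hn
    apply Real.sqrt_le_sqrt
    apply csSup_le
    · exact ⟨meanSq (fun z => pPoly n z * f z - f z) (1/2), ⟨1/2, by norm_num, rfl⟩⟩
    · rintro x ⟨r, hr, rfl⟩
      obtain ⟨hbs, hbrep⟩ := PPolyAux.b_rep hr.1 (ha r hr).1 (ha r hr).2 n
      rw [PPolyAux.parseval hr.1 hr.2 hbs hbrep]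
      have hBsum : Summable fun k => ‖PPolyAux.bco a n k‖ ^ 2 :=
        (PPolyAux.split_est a Sa 0 n hn).1
      have hr0 := hr.1
      apply Summable.tsum_le_tsum ?_ (PPolyAux.sq_summable hbs (fun k => by positivity)) hBsum
      intro k
      have hrk : r ^ k ≤ 1 := pow_le_one₀ hr.1.le hr.2.le
      calc (‖PPolyAux.bco a n k‖ * r ^ k) ^ 2
          = ‖PPolyAux.bco a n k‖ ^ 2 * (r ^ k) ^ 2 := mul_pow _ _ _
        _ ≤ ‖PPolyAux.bco a n k‖ ^ 2 * 1 := by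
            apply mul_le_mul_of_nonneg_left ?_ (by positivity)
            calc (r ^ k) ^ 2 ≤ 1 ^ 2 := pow_le_pow_left₀ (by positivity) hrk 2
              _ = 1 := one_pow 2
        _ = ‖PPolyAux.bco a n k‖ ^ 2 := mul_one _
  have hT : Tendsto (fun m => ∑' i, ‖a (i + m)‖ ^ 2) atTop (nhds 0) :=
    tendsto_sum_nat_add (fun i => ‖a i‖ ^ 2)
  have hBtend : Tendsto B atTop (nhds 0) := by
    rw [Metric.tendsto_atTop]
    intro ε hε
    have h4 : (0:ℝ) < ε / 4 := by linarith
    obtain ⟨m, hm⟩ := Metric.tendsto_atTop.mp hT (ε/4) h4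
    have hTm : ∑' i, ‖a (i + m)‖ ^ 2 < ε / 4 := by
      have := hm m le_rfl
      rw [Real.dist_eq, sub_zero] at this
      exact lt_of_abs_lt this
    obtain ⟨N0, hN0⟩ := exists_nat_gt (4 * (m:ℝ) * (∑' k, ‖a k‖ ^ 2) / ε)
    refine ⟨max N0 1, fun n hn => ?_⟩
    have hn1 : 1 ≤ n := le_trans (le_max_right _ _) hn
    have hnN : (N0:ℝ) ≤ n := by exact_mod_cast le_trans (le_max_left _ _) hn
    have hn0 : (0:ℝ) < n := by exact_mod_cast hn1
    have hA0 : (0:ℝ) ≤ ∑' k, ‖a k‖ ^ 2 := tsum_nonneg fun k => by positivity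
    have hmA : (m:ℝ) / n * (∑' k, ‖a k‖ ^ 2) < ε / 4 := by
      rw [div_mul_eq_mul_div, div_lt_iff₀ hn0]
      have h1 : 4 * (m:ℝ) * (∑' k, ‖a k‖ ^ 2) / ε < n := lt_of_lt_of_le hN0 hnN
      rw [div_lt_iff₀ hε] at h1
      nlinarith
    have hBle := (PPolyAux.split_est a Sa m n hn1).2
    have hB0 : 0 ≤ B n := tsum_nonneg fun k => by positivity
    rw [Real.dist_eq, sub_zero, _root_.abs_of_nonneg hB0]
    calc B n ≤ 2 * ((m:ℝ) / n * (∑' k, ‖a k‖ ^ 2) + ∑' i, ‖a (i + m)‖ ^ 2) := hBle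
      _ < 2 * (ε/4 + ε/4) := by
          apply mul_lt_mul_of_pos_left ?_ (by norm_num)
          exact add_lt_add hmA hTm
      _ = ε := by ring
  have hsqrt : Tendsto (fun n => Real.sqrt (B n)) atTop (nhds 0) := by
    have h1 := (Real.continuous_sqrt.tendsto 0).comp hBtend
    simpa [Function.comp_def] using h1
  apply squeeze_zero' (Eventually.of_forall fun n => Real.sqrt_nonneg _) ?_ hsqrt
  filter_upwards [eventually_ge_atTop 1] with n hn
  exact hg n hn
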